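/- Every involution-free rooted tree (H,x) with at least three vertices contains a partial hardness gadget. -/

import Mathlib

open SimpleGraph

/-- The number of walks of length `n` from `u` to `v` in `G`. -/
noncomputable def walkCount {V : Type*} (G : SimpleGraph V) (n : ℕ) (u v : V) : ℕ :=
  Nat.card {w : G.Walk u v // w.length = n}

/-- The degree of a vertex, as the cardinality of its neighbour set. -/
noncomputable def vdeg {V : Type*} (G : SimpleGraph V) (v : V) : ℕ :=
  (G.neighborSet v).ncard

/-- An involution of a graph: an automorphism of order two. -/
def IsInvolution {V : Type*} (G : SimpleGraph V) (σ : G ≃g G) : Prop :=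
  σ.toEquiv ≠ Equiv.refl V ∧ ∀ v, σ (σ v) = v

/-- A graph is involution-free if it has no involution. -/
def InvolutionFree {V : Type*} (G : SimpleGraph V) : Prop :=
  ¬ ∃ σ : G ≃g G, IsInvolution G σ

/-- A rooted graph `(G, x)` is involution-free if `G` has no involution fixing `x`. -/
def RootedInvolutionFree {V : Type*} (G : SimpleGraph V) (x : V) : Prop :=
  ¬ ∃ σ : G ≃g G, IsInvolution G σ ∧ σ x = x

/-- Every edge of `G` belongs to at most one cycle: any two cycles sharing an
edge have the same edge set. -/
def EdgesOnAtMostOneCycle {V : Type*} (G : SimpleGraph V) : Prop :=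
  ∀ (a b : V) (c : G.Walk a a) (d : G.Walk b b), c.IsCycle → d.IsCycle →
    ∀ e, e ∈ c.edges → e ∈ d.edges → ∀ f, f ∈ c.edges ↔ f ∈ d.edges

/-- A cactus graph: a connected simple graph in which every edge belongs to at
most one cycle. -/
def IsCactus {V : Type*} (G : SimpleGraph V) : Prop :=
  G.Connected ∧ EdgesOnAtMostOneCycle G

/-- The distance from a vertex to a set of vertices. -/
noncomputable def setDist {V : Type*} (G : SimpleGraph V) (v : V) (S : Set V) : ℕ :=
  sInf (G.dist v '' S)

/-- A hardness gadget `(β, s, t, O, i, K, k, w)` in a graph `G`. -/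
structure HardnessGadget {V : Type*} (G : SimpleGraph V) where
  β : ℕ
  s : V
  t : V
  i : V
  O : Set V
  K : Set V
  k : V → ℕ
  w : V → V
  β_pos : 0 < β
  i_not_in_O : i ∉ O
  i_not_in_K : i ∉ K
  O_disj_K : Disjoint O K
  nbhd_partition : O ∪ {i} ∪ K = G.neighborSet s
  O_odd : Odd O.ncard
  s_unique : ∀ o ∈ O, ∀ y ∈ O ∪ {i}, ∀ z : V,
    (G.Adj z o ∧ G.Adj z y ∧ Odd (walkCount G β z t)) ↔ z = s
  i_t_even : Even (walkCount G (1 + β) i t)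
  k_pos : ∀ u ∈ K, 0 < k u
  w_walks : ∀ u ∈ K, Even (walkCount G (k u) (w u) u) ∧
    ∀ y ∈ O ∪ {i}, Odd (walkCount G (k u) (w u) y)

/-- The distance requirements of a hardness gadget with respect to a vertex `v`. -/
def HardnessGadget.SatisfiesDistReq {V : Type*} {G : SimpleGraph V}
    (Γ : HardnessGadget G) (v : V) : Prop :=
  ((setDist G v (Γ.O ∪ {Γ.i}) : ℤ) + (G.dist v Γ.t : ℤ) > (Γ.β : ℤ) - 1) ∧
  ∀ u ∈ Γ.K, ((G.dist v (Γ.w u) : ℤ) + (setDist G v (Γ.O ∪ {Γ.i, u}) : ℤ)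
      > (Γ.k u : ℤ) - 2)

/-- `P` is the unique shortest path between its endpoints. -/
def IsUniqueShortestPath {V : Type*} (G : SimpleGraph V) {u v : V}
    (P : G.Walk u v) : Prop :=
  P.IsPath ∧ ∀ Q : G.Walk u v, Q.IsPath → Q.length ≤ P.length → Q = P

/-- The graph `G` contains a cycle. -/
def HasCycle {V : Type*} (G : SimpleGraph V) : Prop :=
  ∃ (a : V) (c : G.Walk a a), c.IsCycle

/-- The edge `e` lies on a 4-cycle of `G`. -/
def EdgeOnFourCycle {V : Type*} (G : SimpleGraph V) (e : Sym2 V) : Prop :=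
  ∃ (a : V) (c : G.Walk a a), c.IsCycle ∧ c.length = 4 ∧ e ∈ c.edges

/-- An unbristled mosaic: the one-vertex rooted graph, or a rooted cactus graph
that is a union of 4-cycles. -/
def IsUnbristledMosaic {V : Type*} (G : SimpleGraph V) (x : V) : Prop :=
  (∀ v : V, v = x) ∨ (IsCactus G ∧ ∀ e ∈ G.edgeSet, EdgeOnFourCycle G e)

/-- A mosaic: a rooted graph obtained from an unbristled mosaic on a vertex
subset `V'` containing the root by attaching a perfect matching ("bristles")
between the remaining vertices and a subset of `V'`. -/
def IsMosaic {V : Type*} (G : SimpleGraph V) (x : V) : Prop :=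
  ∃ (V' : Set V) (hx : x ∈ V'),
    IsUnbristledMosaic (G.induce V') ⟨x, hx⟩ ∧
    (∀ v, v ∉ V' → ∀ u, G.Adj v u → u ∈ V') ∧
    (∀ v, v ∉ V' → ∃! u, G.Adj v u) ∧
    (∀ u v₁ v₂, v₁ ∉ V' → v₂ ∉ V' → G.Adj u v₁ → G.Adj u v₂ → v₁ = v₂)

/-- A proper mosaic: a mosaic containing at least one cycle. -/
def IsProperMosaic {V : Type*} (G : SimpleGraph V) (x : V) : Prop :=
  IsMosaic G x ∧ HasCycle G

/-- A shortcut in the rooted graph `(G, x)`: a pair of distinct odd-degree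
vertices of degree at least 3 with a unique shortest path between them that
avoids `x`. -/
def HasShortcut {V : Type*} (G : SimpleGraph V) (x : V) : Prop :=
  ∃ v₁ v₂ : V, v₁ ≠ v₂ ∧ Odd (vdeg G v₁) ∧ Odd (vdeg G v₂) ∧
    3 ≤ vdeg G v₁ ∧ 3 ≤ vdeg G v₂ ∧
    ∃ P : G.Walk v₁ v₂, IsUniqueShortestPath G P ∧ x ∉ P.support

/-- A 2,3-path `(P, v₂, v₃)` in a rooted graph: `v₂` and `v₃` lie on a common
cycle, have degrees 2 and 3 respectively, and the extensions of `P` by `v₂`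
and by `v₃` are unique shortest paths from the root. -/
def Is23Path {V : Type*} (G : SimpleGraph V) {x z : V} (P : G.Walk x z)
    (v₂ v₃ : V) : Prop :=
  (∃ (a : V) (c : G.Walk a a), c.IsCycle ∧ v₂ ∈ c.support ∧ v₃ ∈ c.support) ∧
  vdeg G v₂ = 2 ∧ vdeg G v₃ = 3 ∧
  (∃ h₂ : G.Adj z v₂, IsUniqueShortestPath G (P.concat h₂)) ∧
  (∃ h₃ : G.Adj z v₃, IsUniqueShortestPath G (P.concat h₃))

/-- A partial hardness gadget `(s, i, O, P)` in the rooted graph `(G, x)`. -/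
def IsPartialHardnessGadget {V : Type*} (G : SimpleGraph V) (x s i : V)
    (O : Set V) (P : G.Walk x i) : Prop :=
  i ∉ O ∧ insert i O = G.neighborSet s ∧ Odd O.ncard ∧
  IsUniqueShortestPath G P ∧
  ∃ his : G.Adj i s, IsUniqueShortestPath G (P.concat his) ∧
    ∀ o ∈ O, ∃ hso : G.Adj s o, IsUniqueShortestPath G ((P.concat his).concat hso)

/-- `C` is (the vertex set of) a connected component of `G - {x}`, i.e. of the
split of `G` at `x`; the corresponding member of the split is the subgraph of
`G` induced by `C ∪ {x}`. -/
def IsSplitComponent {V : Type*} (G : SimpleGraph V) (x : V) (C : Set V) : Prop :=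
  x ∉ C ∧ C.Nonempty ∧ (G.induce C).Connected ∧
  ∀ u ∈ C, ∀ v : V, G.Adj u v → v ≠ x → v ∈ C

/-- `x` is a cut vertex: `G - {x}` has at least two connected components. -/
def IsCutVertex {V : Type*} (G : SimpleGraph V) (x : V) : Prop :=
  ∃ C₁ C₂ : Set V, IsSplitComponent G x C₁ ∧ IsSplitComponent G x C₂ ∧ C₁ ≠ C₂

section Aux

open SimpleGraph.Walk

variable {V : Type*} {G : SimpleGraph V}

private lemma usp_of_isPath (ha : G.IsAcyclic) {u v : V} {P : G.Walk u v} (hP : P.IsPath) :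
    IsUniqueShortestPath G P :=
  ⟨hP, fun Q hQ _ => congrArg Subtype.val (ha.path_unique ⟨Q, hQ⟩ ⟨P, hP⟩)⟩

private lemma walk_eq_of_paths (ha : G.IsAcyclic) {u v : V} {P Q : G.Walk u v}
    (hP : P.IsPath) (hQ : Q.IsPath) : P = Q :=
  congrArg Subtype.val (ha.path_unique ⟨P, hP⟩ ⟨Q, hQ⟩)

private lemma gadget_of_even [Fintype V] (htree : G.IsTree) (x s : V) (hsx : s ≠ x)
    (heven : Even (vdeg G s)) :
    ∃ (s' i : V) (O : Set V) (P : G.Walk x i), IsPartialHardnessGadget G x s' i O P := by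
  classical
  have ha := htree.IsAcyclic
  obtain ⟨W⟩ := htree.isConnected.preconnected s x
  obtain ⟨W, hWp⟩ : ∃ W : G.Walk s x, W.IsPath := ⟨W.toPath.1, W.toPath.2⟩
  cases W with
  | nil => exact absurd rfl hsx
  | @cons _ i _ h rest =>
    rw [Walk.cons_isPath_iff] at hWp
    obtain ⟨hrest, hsnot⟩ := hWp
    have hiS : i ∈ G.neighborSet s := h
    have hfin : (G.neighborSet s).Finite := Set.toFinite _
    refine ⟨s, i, G.neighborSet s \ {i}, rest.reverse, by simp, ?_, ?_, ?_, h.symm, ?_, ?_⟩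
    · rw [Set.insert_diff_singleton, Set.insert_eq_self.2 hiS]
    · have h1 : (G.neighborSet s \ {i}).ncard = vdeg G s - 1 :=
        Set.ncard_diff_singleton_of_mem hiS
      have hpos : 0 < vdeg G s := (Set.ncard_pos hfin).2 ⟨i, hiS⟩
      obtain ⟨k, hk⟩ := heven
      refine ⟨k - 1, ?_⟩
      rw [h1]
      omega
    · exact usp_of_isPath ha hrest.reverse
    · apply usp_of_isPath ha
      rw [← Walk.isPath_reverse_iff]
      simp only [Walk.reverse_concat, Walk.reverse_reverse]
      exact (Walk.cons_isPath_iff _ _).2 ⟨hrest, hsnot⟩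
    · intro o ho
      have hso : G.Adj s o := ho.1
      have hoi : o ≠ i := ho.2
      refine ⟨hso, ?_⟩
      have honot : o ∉ (Walk.cons h rest).support := by
        rw [Walk.support_cons]
        intro hmem
        rcases List.mem_cons.1 hmem with rfl | ho2
        · exact G.irrefl hso
        · -- o on rest: contradiction with acyclicity
          have hq1 : (rest.takeUntil o ho2).IsPath := hrest.takeUntil ho2
          have hs1 : s ∉ (rest.takeUntil o ho2).support :=
            fun hc => hsnot (Walk.support_takeUntil_subset _ ho2 hc)
          have hp1 : (Walk.cons h (rest.takeUntil o ho2)).IsPath :=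
            (Walk.cons_isPath_iff _ _).2 ⟨hq1, hs1⟩
          have hp2 : (Walk.cons hso Walk.nil : G.Walk s o).IsPath := by
            rw [Walk.cons_isPath_iff]
            exact ⟨Walk.IsPath.nil, by simp [G.ne_of_adj hso]⟩
          have := walk_eq_of_paths ha hp1 hp2
          have hlen := congrArg Walk.length this
          simp only [Walk.length_cons, Walk.length_nil] at hlen
          exact hoi ((rest.takeUntil o ho2).eq_of_length_eq_zero (by omega)).symm
      apply usp_of_isPath ha
      rw [← Walk.isPath_reverse_iff]
      simp only [Walk.reverse_concat, Walk.reverse_reverse]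
      exact (Walk.cons_isPath_iff _ _).2
        ⟨(Walk.cons_isPath_iff _ _).2 ⟨hrest, hsnot⟩, honot⟩

end Aux


section Main

open SimpleGraph.Walk

variable {V : Type*} {G : SimpleGraph V}

private lemma leaf_nbhd {a v : V} (h : G.Adj v a) (h1 : vdeg G a = 1) :
    ∀ w, G.Adj a w ↔ w = v := by
  obtain ⟨c, hc⟩ := Set.ncard_eq_one.1 h1
  have hv : v ∈ G.neighborSet a := h.symm
  rw [hc] at hv
  intro w
  constructor
  · intro hw
    have : w ∈ G.neighborSet a := hw
    rw [hc] at this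
    rw [this, ← hv]
  · rintro rfl
    exact h.symm

private lemma swap_adj [DecidableEq V] {a b v : V} (hab : a ≠ b)
    (ha : ∀ w, G.Adj a w ↔ w = v) (hb : ∀ w, G.Adj b w ↔ w = v) :
    ∀ u w, G.Adj u w → G.Adj (Equiv.swap a b u) (Equiv.swap a b w) := by
  have hva : v ≠ a := by
    intro hc
    exact G.irrefl (by rw [← hc] at ha; exact (ha v).2 rfl)
  have hvb : v ≠ b := by
    intro hc
    exact G.irrefl (by rw [← hc] at hb; exact (hb v).2 rfl)
  intro u w huw
  by_cases hua : u = a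
  · subst hua
    have hw : w = v := (ha w).1 huw
    subst hw
    rw [Equiv.swap_apply_left, Equiv.swap_apply_of_ne_of_ne hva hvb]
    exact (hb w).2 rfl
  by_cases hub : u = b
  · subst hub
    have hw : w = v := (hb w).1 huw
    subst hw
    rw [Equiv.swap_apply_right, Equiv.swap_apply_of_ne_of_ne hva hvb]
    exact (ha w).2 rfl
  by_cases hwa : w = a
  · subst hwa
    have hu : u = v := (ha u).1 huw.symm
    subst hu
    rw [Equiv.swap_apply_left, Equiv.swap_apply_of_ne_of_ne hva hvb]
    exact ((hb u).2 rfl).symm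
  by_cases hwb : w = b
  · subst hwb
    have hu : u = v := (hb u).1 huw.symm
    subst hu
    rw [Equiv.swap_apply_right, Equiv.swap_apply_of_ne_of_ne hva hvb]
    exact ((ha u).2 rfl).symm
  rw [Equiv.swap_apply_of_ne_of_ne hua hub, Equiv.swap_apply_of_ne_of_ne hwa hwb]
  exact huw

private lemma involution_of_two_leaves [DecidableEq V] (x a b v : V) (hab : a ≠ b)
    (hA : G.Adj v a) (hB : G.Adj v b) (h1a : vdeg G a = 1) (h1b : vdeg G b = 1)
    (hax : a ≠ x) (hbx : b ≠ x) : ¬ RootedInvolutionFree G x := by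
  intro hif
  have ha := leaf_nbhd hA h1a
  have hb := leaf_nbhd hB h1b
  have hdir := swap_adj hab ha hb
  have hiff : ∀ u w, G.Adj (Equiv.swap a b u) (Equiv.swap a b w) ↔ G.Adj u w := by
    intro u w
    constructor
    · intro h
      have := hdir _ _ h
      simpa using this
    · exact hdir u w
  refine hif ⟨⟨Equiv.swap a b, fun {u w} => hiff u w⟩, ⟨?_, ?_⟩, ?_⟩
  · intro hc
    have h2 : Equiv.swap a b a = (Equiv.refl V) a := congrArg (fun e : V ≃ V => e a) hc
    rw [Equiv.swap_apply_left] at h2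
    exact hab h2.symm
  · intro u
    exact Equiv.swap_apply_self a b u
  · exact Equiv.swap_apply_of_ne_of_ne (Ne.symm hax) (Ne.symm hbx)

end Main

/-- Every involution-free rooted tree with at least three vertices contains a
partial hardness gadget. -/
theorem involutionFree_tree_partialHardnessGadget {V : Type*} [Fintype V]
    (G : SimpleGraph V) (htree : G.IsTree) (x : V)
    (hif : RootedInvolutionFree G x) (hcard : 3 ≤ Fintype.card V) :
    ∃ (s i : V) (O : Set V) (P : G.Walk x i),
      IsPartialHardnessGadget G x s i O P := by
  classical
  by_cases hs : ∃ s, s ≠ x ∧ Even (vdeg G s)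
  · obtain ⟨s, hsx, he⟩ := hs
    exact gadget_of_even htree x s hsx he
  exfalso
  push_neg at hs
  have ha := htree.IsAcyclic
  -- choose paths from the root
  have hpex : ∀ v : V, ∃ q : G.Walk x v, q.IsPath := by
    intro v
    obtain ⟨w⟩ := htree.isConnected.preconnected x v
    exact ⟨w.toPath.1, w.toPath.2⟩
  choose p hp using hpex
  -- vdeg equals degree
  have hdeg : ∀ v, G.degree v = vdeg G v := by
    intro v
    have h0 : G.degree v = (G.neighborFinset v).card := rfl
    rw [h0, ← Set.ncard_coe_finset, vdeg]
    congr 1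
    rw [SimpleGraph.neighborFinset_def, Set.coe_toFinset]
  -- a vertex of degree at least two exists
  have hex2 : ∃ v, 2 ≤ vdeg G v := by
    by_contra hno
    push_neg at hno
    have hsum : ∑ v, G.degree v = 2 * G.edgeFinset.card := G.sum_degrees_eq_twice_card_edges
    have hcardE : G.edgeFinset.card + 1 = Fintype.card V := htree.card_edgeFinset
    have hle : ∑ v, G.degree v ≤ ∑ _v : V, 1 :=
      Finset.sum_le_sum fun v _ => by have := hno v; rw [hdeg]; omega
    rw [Finset.sum_const, smul_eq_mul, mul_one, Finset.card_univ] at hle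
    rw [hsum] at hle
    omega
  -- choose v of degree ≥ 2 with (p v) of maximal length
  obtain ⟨v, hvF, hvmax⟩ := Finset.exists_max_image
    (Finset.univ.filter fun u => 2 ≤ vdeg G u) (fun u => (p u).length)
    (by obtain ⟨u, hu⟩ := hex2; exact ⟨u, by simp [hu]⟩)
  have hv2 : 2 ≤ vdeg G v := by simpa using hvF
  have hmax : ∀ u, 2 ≤ vdeg G u → (p u).length ≤ (p v).length := by
    intro u hu
    exact hvmax u (by simp [hu])
  -- neighbours of v off the path p v are leaves different from x
  have hA : ∀ u, G.Adj v u → u ∉ (p v).support → vdeg G u = 1 ∧ u ≠ x := by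
    intro u hadj hu
    have hq : ((p v).concat hadj).IsPath := by
      rw [← Walk.isPath_reverse_iff]
      simp only [Walk.reverse_concat]
      rw [Walk.cons_isPath_iff]
      refine ⟨(hp v).reverse, ?_⟩
      rwa [Walk.support_reverse, List.mem_reverse]
    have hpu : p u = (p v).concat hadj := walk_eq_of_paths ha (hp u) hq
    have hlen : (p u).length = (p v).length + 1 := by
      rw [hpu, Walk.length_concat]
    have hux : u ≠ x := by
      rintro rfl
      have hnil : p u = Walk.nil := walk_eq_of_paths ha (hp u) Walk.IsPath.nil
      rw [hnil] at hlen
      simp at hlen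
    have hle1 : vdeg G u ≤ 1 := by
      by_contra hc
      have := hmax u (by omega)
      omega
    have hge1 : 1 ≤ vdeg G u :=
      (Set.ncard_pos (Set.toFinite _)).2 ⟨v, hadj.symm⟩
    exact ⟨by omega, hux⟩
  -- at most one neighbour of v lies on the path p v
  have hB : ∀ u, G.Adj v u → ∀ hu : u ∈ (p v).support,
      ∃ (q : G.Walk x u) (e : G.Adj u v), p v = q.concat e := by
    intro u hadj hu
    have hne : u ≠ v := (G.ne_of_adj hadj).symm
    have hdrop : (p v).dropUntil u hu = Walk.cons hadj.symm Walk.nil := by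
      refine walk_eq_of_paths ha ((hp v).dropUntil hu) ?_
      rw [Walk.cons_isPath_iff]
      exact ⟨Walk.IsPath.nil, by simp [hne]⟩
    refine ⟨(p v).takeUntil u hu, hadj.symm, ?_⟩
    rw [Walk.concat_eq_append, ← hdrop, Walk.take_spec]
  have hBuniq : ∀ u₁ u₂, G.Adj v u₁ → G.Adj v u₂ →
      u₁ ∈ (p v).support → u₂ ∈ (p v).support → u₁ = u₂ := by
    intro u₁ u₂ h1 h2 hm1 hm2
    obtain ⟨q₁, e₁, he₁⟩ := hB u₁ h1 hm1
    obtain ⟨q₂, e₂, he₂⟩ := hB u₂ h2 hm2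
    obtain ⟨hv', -⟩ := Walk.concat_inj (he₁.symm.trans he₂)
    exact hv'
  -- find two leaf-children of v
  set Par : Set V := {u | u ∈ G.neighborSet v ∧ u ∈ (p v).support} with hParDef
  set N' : Set V := G.neighborSet v \ Par with hN'Def
  have hParSub : Par ⊆ G.neighborSet v := fun u hu => hu.1
  have hN'2 : 2 ≤ N'.ncard := by
    have hNd : N'.ncard = (G.neighborSet v).ncard - Par.ncard :=
      Set.ncard_diff hParSub (Set.toFinite _)
    by_cases hvx : v = x
    · -- the path p x is nil, so Par is empty
      have hnil : p v = (hvx ▸ Walk.nil : G.Walk x v) := by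
        subst hvx
        exact walk_eq_of_paths ha (hp v) Walk.IsPath.nil
      have hPar0 : Par = ∅ := by
        subst hvx
        ext u
        simp only [hParDef, Set.mem_setOf_eq, Set.mem_empty_iff_false, iff_false, not_and]
        intro hu hsup
        rw [hnil] at hsup
        simp only [Walk.support_nil, List.mem_singleton] at hsup
        subst hsup
        exact G.irrefl hu
      rw [hNd, hPar0, Set.ncard_empty]
      have hvd : vdeg G v = (G.neighborSet v).ncard := rfl
      omega
    · have hodd : ¬ Even (vdeg G v) := hs v hvx
      have h3 : 3 ≤ vdeg G v := by
        rcases Nat.even_or_odd (vdeg G v) with he | ho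
        · exact absurd he hodd
        · obtain ⟨k, hk⟩ := ho
          omega
      have hPar1 : Par.ncard ≤ 1 := by
        rcases Set.eq_empty_or_nonempty Par with hP | ⟨u, hu⟩
        · rw [hP, Set.ncard_empty]; omega
        · have : Par ⊆ {u} := by
            intro w hw
            have := hBuniq w u hw.1 hu.1 hw.2 hu.2
            simp [this]
          calc Par.ncard ≤ ({u} : Set V).ncard := Set.ncard_le_ncard this (Set.toFinite _)
          _ = 1 := Set.ncard_singleton u
      rw [hNd]
      have hvd : vdeg G v = (G.neighborSet v).ncard := rfl
      omega
  obtain ⟨a, haN, b, hbN, hab⟩ := (Set.one_lt_ncard (Set.toFinite _)).1 (by omega : 1 < N'.ncard)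
  have haA : G.Adj v a := haN.1
  have hbA : G.Adj v b := hbN.1
  have haL := hA a haA (fun hc => haN.2 ⟨haN.1, hc⟩)
  have hbL := hA b hbA (fun hc => hbN.2 ⟨hbN.1, hc⟩)
  exact involution_of_two_leaves x a b v hab haA hbA haL.1 hbL.1 haL.2 hbL.2 hif
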